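/- arXiv:0906.2501 — 2 statements merged into one kernel-verified Lean document; each statement's English description precedes it below -/
import Mathlib

section
/- Any nontrivial C² localized solution of the ODE α̂ φ'' − γ φ'((φ')² + 3φφ'') = Ω̂ φ with α̂ ≠ 0, Ω̂ ≠ 0 and φ(x), φ'(x) → 0 as |x| → ∞ must be identically zero. (No classical localized solutions exist.) -/
open Filter

theorem stmt_10 (αh γ Ωh : ℝ) (hα : αh ≠ 0) (hΩ : Ωh ≠ 0)
    (φ : ℝ → ℝ) (hφ : ContDiff ℝ 2 φ)
    (hode : ∀ x : ℝ, αh * deriv (deriv φ) x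
        - γ * deriv φ x * ((deriv φ x)^2 + 3 * φ x * deriv (deriv φ) x)
        = Ωh * φ x)
    (hdecay : Tendsto φ (Filter.cocompact ℝ) (nhds 0))
    (hdecay' : Tendsto (deriv φ) (Filter.cocompact ℝ) (nhds 0)) :
    ∀ x : ℝ, φ x = 0 := by
  have hφ1 : Differentiable ℝ φ := hφ.differentiable two_ne_zero
  have hdφ : ContDiff ℝ 1 (deriv φ) := by
    have h := (contDiff_succ_iff_deriv.mp (by exact_mod_cast hφ : ContDiff ℝ (1+1) φ)).2
    exact h.2
  have hφ1' : Differentiable ℝ (deriv φ) := hdφ.differentiable one_ne_zero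
  set E : ℝ → ℝ := fun x => αh/2 * (deriv φ x)^2 - γ * (φ x * (deriv φ x)^3) - Ωh/2 * (φ x)^2
    with hEdef
  have hEderiv : ∀ x, HasDerivAt E
      (αh/2 * (2 * deriv φ x ^ 1 * deriv (deriv φ) x)
        - γ * (deriv φ x * (deriv φ x)^3 + φ x * (3 * deriv φ x ^ 2 * deriv (deriv φ) x))
        - Ωh/2 * (2 * φ x ^ 1 * deriv φ x)) x := by
    intro x
    have h1 : HasDerivAt φ (deriv φ x) x := (hφ1 x).hasDerivAt
    have h2 : HasDerivAt (deriv φ) (deriv (deriv φ) x) x := (hφ1' x).hasDerivAt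
    exact (((h2.pow 2).const_mul (αh/2)).sub
      ((h1.mul (h2.pow 3)).const_mul γ)).sub ((h1.pow 2).const_mul (Ωh/2))
  have hEzero : ∀ x, deriv E x = 0 := by
    intro x
    rw [(hEderiv x).deriv]
    have h := hode x
    push_cast
    linear_combination (deriv φ x) * h
  have hEdiff : Differentiable ℝ E := fun x => (hEderiv x).differentiableAt
  have hconst : ∀ x, E x = E 0 := fun x => is_const_of_deriv_eq_zero hEdiff hEzero x 0
  have hElim : Tendsto E (Filter.cocompact ℝ) (nhds 0) := by
    have : Tendsto E (Filter.cocompact ℝ)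
        (nhds (αh/2 * 0^2 - γ * (0 * 0^3) - Ωh/2 * 0^2)) := by
      exact (((hdecay'.pow 2).const_mul (αh/2)).sub
        ((hdecay.mul (hdecay'.pow 3)).const_mul γ)).sub ((hdecay.pow 2).const_mul (Ωh/2))
    simpa using this
  have hE0 : E 0 = 0 := by
    have h2 : Tendsto E (Filter.cocompact ℝ) (nhds (E 0)) := by
      have : E = fun _ => E 0 := funext hconst
      rw [this]; exact tendsto_const_nhds
    exact tendsto_nhds_unique h2 hElim
  have hEall : ∀ x, E x = 0 := fun x => (hconst x).trans hE0
  -- now suppose some φ x₀ ≠ 0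
  by_contra hc
  push_neg at hc
  obtain ⟨x₀, hx₀⟩ := hc
  set g : ℝ → ℝ := fun x => (φ x)^2 with hgdef
  have hgcont : Continuous g := (hφ1.continuous.pow 2)
  have hglim : Tendsto g (Filter.cocompact ℝ) (nhds 0) := by
    have := hdecay.pow 2
    simpa using this
  have hgx₀ : 0 < g x₀ := by positivity
  have hev : ∀ᶠ x in Filter.cocompact ℝ, g x ≤ g x₀ :=
    (hglim.eventually_lt_const hgx₀).mono fun x h => h.le
  obtain ⟨a, ha⟩ := hgcont.exists_forall_ge' x₀ hev
  have hga : 0 < g a := lt_of_lt_of_le hgx₀ (ha x₀)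
  have hφa : φ a ≠ 0 := by
    intro h
    rw [hgdef] at hga
    simp [h] at hga
  have hmax : IsLocalMax g a :=
    IsMaxOn.isLocalMax (isMaxOn_iff.mpr fun y _ => ha y) Filter.univ_mem
  have hgderiv : HasDerivAt g (2 * φ a ^ 1 * deriv φ a) a := (hφ1 a).hasDerivAt.pow 2
  have hd0 : 2 * φ a ^ 1 * deriv φ a = 0 := by
    rw [← hgderiv.deriv]; exact hmax.deriv_eq_zero
  have hφ'a : deriv φ a = 0 := by
    simp only [pow_one] at hd0
    have h2 : φ a * deriv φ a = 0 := by linarith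
    exact (mul_eq_zero.mp h2).resolve_left hφa
  have := hEall a
  rw [hEdef] at this
  simp only [hφ'a] at this
  have : Ωh * (φ a)^2 = 0 := by nlinarith
  rcases mul_eq_zero.mp this with h | h
  · exact hΩ h
  · exact hφa (pow_eq_zero_iff (by norm_num) |>.mp h)
end

section
/- Suppose Ψ₀, Ψ₂ are 2π-periodic C² functions and V is 2π-periodic continuous, E₀ ∈ ℝ, with -Ψ₂'' + VΨ₂ - E₀Ψ₂ = -GΨ₀³ for a 2π-periodic continuous G, and -Ψ₀'' + VΨ₀ - E₀Ψ₀ = 0. Also suppose Ψ₁ is a 2π-periodic C² solution of -Ψ₁'' + VΨ₁ - E₀Ψ₁ = 2Ψ₀'. Then γ := -2∫₀^{2π} Ψ₂'(x)Ψ₀(x) dx + ∫₀^{2π} G(x)Ψ₀(x)³Ψ₁(x) dx = 0. -/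
open MeasureTheory intervalIntegral

theorem stmt_11 (V G Ψ₀ Ψ₁ Ψ₂ : ℝ → ℝ) (E₀ : ℝ)
    (hV : Continuous V) (hVper : ∀ x, V (x + 2 * Real.pi) = V x)
    (hG : Continuous G) (hGper : ∀ x, G (x + 2 * Real.pi) = G x)
    (hΨ₀ : ContDiff ℝ 2 Ψ₀) (hΨ₀per : ∀ x, Ψ₀ (x + 2 * Real.pi) = Ψ₀ x)
    (hΨ₁ : ContDiff ℝ 2 Ψ₁) (hΨ₁per : ∀ x, Ψ₁ (x + 2 * Real.pi) = Ψ₁ x)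
    (hΨ₂ : ContDiff ℝ 2 Ψ₂) (hΨ₂per : ∀ x, Ψ₂ (x + 2 * Real.pi) = Ψ₂ x)
    (heq0 : ∀ x, -(deriv (deriv Ψ₀) x) + V x * Ψ₀ x - E₀ * Ψ₀ x = 0)
    (heq1 : ∀ x, -(deriv (deriv Ψ₁) x) + V x * Ψ₁ x - E₀ * Ψ₁ x = 2 * deriv Ψ₀ x)
    (heq2 : ∀ x, -(deriv (deriv Ψ₂) x) + V x * Ψ₂ x - E₀ * Ψ₂ x
        = -(G x * (Ψ₀ x)^3)) :
    -2 * (∫ x in (0:ℝ)..(2 * Real.pi), deriv Ψ₂ x * Ψ₀ x)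
      + (∫ x in (0:ℝ)..(2 * Real.pi), G x * (Ψ₀ x)^3 * Ψ₁ x) = 0 := by
  rw [show (2 : WithTop ℕ∞) = 1 + 1 by norm_num] at hΨ₁ hΨ₂
  have hd0 : Differentiable ℝ Ψ₀ := hΨ₀.differentiable (by norm_num)
  have hd1 : Differentiable ℝ Ψ₁ := hΨ₁.differentiable (by norm_num)
  have hd2 : Differentiable ℝ Ψ₂ := hΨ₂.differentiable (by norm_num)
  have hdd1 : Differentiable ℝ (deriv Ψ₁) :=
    (contDiff_succ_iff_deriv.mp hΨ₁).2.2.differentiable one_ne_zero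
  have hdd2 : Differentiable ℝ (deriv Ψ₂) :=
    (contDiff_succ_iff_deriv.mp hΨ₂).2.2.differentiable one_ne_zero
  set F : ℝ → ℝ := fun x =>
    -2 * (Ψ₂ x * Ψ₀ x) + (deriv Ψ₂ x * Ψ₁ x - deriv Ψ₁ x * Ψ₂ x) with hF
  have hFd : ∀ x, HasDerivAt F
      (-2 * (deriv Ψ₂ x * Ψ₀ x) + G x * (Ψ₀ x)^3 * Ψ₁ x) x := by
    intro x
    have h2'' : deriv (deriv Ψ₂) x = V x * Ψ₂ x - E₀ * Ψ₂ x + G x * (Ψ₀ x)^3 := by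
      have := heq2 x; linarith
    have h1'' : deriv (deriv Ψ₁) x = V x * Ψ₁ x - E₀ * Ψ₁ x - 2 * deriv Ψ₀ x := by
      have := heq1 x; linarith
    have h := ((((hd2 x).hasDerivAt.mul (hd0 x).hasDerivAt).const_mul (-2)).add
      ((((hdd2 x).hasDerivAt.mul (hd1 x).hasDerivAt)).sub
        (((hdd1 x).hasDerivAt.mul (hd2 x).hasDerivAt))))
    convert h using 1
    all_goals first | rfl | (rw [h2'', h1'']; ring)
  have hcont : Continuous fun x => -2 * (deriv Ψ₂ x * Ψ₀ x) + G x * (Ψ₀ x)^3 * Ψ₁ x := by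
    fun_prop
  have hFTC : (∫ x in (0:ℝ)..(2 * Real.pi),
      (-2 * (deriv Ψ₂ x * Ψ₀ x) + G x * (Ψ₀ x)^3 * Ψ₁ x)) = F (2 * Real.pi) - F 0 := by
    exact intervalIntegral.integral_eq_sub_of_hasDerivAt
      (fun x _ => hFd x) (hcont.intervalIntegrable _ _)
  have hper2' : deriv Ψ₂ (0 + 2 * Real.pi) = deriv Ψ₂ 0 := by
    rw [← deriv_comp_add_const]
    congr 1
    funext y; exact hΨ₂per y
  have hper1' : deriv Ψ₁ (0 + 2 * Real.pi) = deriv Ψ₁ 0 := by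
    rw [← deriv_comp_add_const]
    congr 1
    funext y; exact hΨ₁per y
  have hF0 : F (2 * Real.pi) - F 0 = 0 := by
    have e0 := hΨ₀per 0
    have e1 := hΨ₁per 0
    have e2 := hΨ₂per 0
    simp only [zero_add] at e0 e1 e2 hper2' hper1'
    simp only [hF, e0, e1, e2, hper2', hper1']
    ring
  have hi1 : IntervalIntegrable (fun x => -2 * (deriv Ψ₂ x * Ψ₀ x)) volume 0 (2 * Real.pi) := by
    apply Continuous.intervalIntegrable; fun_prop
  have hi2 : IntervalIntegrable (fun x => G x * (Ψ₀ x)^3 * Ψ₁ x) volume 0 (2 * Real.pi) := by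
    apply Continuous.intervalIntegrable; fun_prop
  rw [hF0] at hFTC
  rw [intervalIntegral.integral_add hi1 hi2] at hFTC
  rw [intervalIntegral.integral_const_mul] at hFTC
  linarith
end
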